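/- Let μ be a finite measure on a measurable space M with 0 < V < ∞, and let f, h : M → ℝ be measurable functions such that e^{−f}, e^{h}, e^{(h−f)/2} and (f+h)e^{−f} are μ-integrable and ∫_M e^{−f} dμ = ∫_M e^{h} dμ = V. Then ∫_M (e^{−f/2} − e^{h/2})² dμ ≤ 2V (1 − exp( (1/(2V)) ∫_M (f+h) e^{−f} dμ )). -/

import Mathlib

open MeasureTheory Real
open scoped NNReal ENNReal

/-- Under the normalizations `∫ e^{−f} dμ = ∫ e^{h} dμ = V`, one has
`∫ (e^{−f/2} − e^{h/2})² dμ ≤ 2V (1 − exp((1/(2V)) ∫ (f+h) e^{−f} dμ))`. -/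
theorem square_diff_exp_integral_le
    {M : Type*} [MeasurableSpace M] (μ : Measure M) [IsFiniteMeasure μ]
    (V : ℝ) (hV : 0 < V)
    (f h : M → ℝ) (hf : Measurable f) (hh : Measurable h)
    (hfint : Integrable (fun x => Real.exp (-f x)) μ)
    (hhint : Integrable (fun x => Real.exp (h x)) μ)
    (hmixint : Integrable (fun x => Real.exp ((h x - f x) / 2)) μ)
    (hfhint : Integrable (fun x => (f x + h x) * Real.exp (-f x)) μ)
    (hfnorm : ∫ x, Real.exp (-f x) ∂μ = V)
    (hhnorm : ∫ x, Real.exp (h x) ∂μ = V) :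
    ∫ x, (Real.exp (-f x / 2) - Real.exp (h x / 2)) ^ 2 ∂μ ≤
      2 * V * (1 - Real.exp ((1 / (2 * V)) * ∫ x, (f x + h x) * Real.exp (-f x) ∂μ)) := by
  -- Step 1: expand the square.
  have hexpand : ∀ x, (Real.exp (-f x / 2) - Real.exp (h x / 2)) ^ 2
      = Real.exp (-f x) + Real.exp (h x) - 2 * Real.exp ((h x - f x) / 2) := by
    intro x
    have e1 : Real.exp (-f x / 2) ^ 2 = Real.exp (-f x) := by
      rw [sq, ← Real.exp_add]; congr 1; ring
    have e2 : Real.exp (-f x / 2) * Real.exp (h x / 2) = Real.exp ((h x - f x) / 2) := by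
      rw [← Real.exp_add]; congr 1; ring
    have e3 : Real.exp (h x / 2) ^ 2 = Real.exp (h x) := by
      rw [sq, ← Real.exp_add]; congr 1; ring
    rw [sub_sq, e1, mul_assoc, e2, e3]
    ring
  have hLHS : ∫ x, (Real.exp (-f x / 2) - Real.exp (h x / 2)) ^ 2 ∂μ
      = 2 * V - 2 * ∫ x, Real.exp ((h x - f x) / 2) ∂μ := by
    rw [integral_congr_ae (Filter.Eventually.of_forall hexpand)]
    have h1 : Integrable (fun x => Real.exp (-f x) + Real.exp (h x)) μ := hfint.add hhint
    have h2 : Integrable (fun x => 2 * Real.exp ((h x - f x) / 2)) μ := hmixint.const_mul 2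
    rw [integral_sub h1 h2, integral_add hfint hhint, integral_const_mul, hfnorm, hhnorm]
    ring
  rw [hLHS]
  -- It suffices to show Jensen's inequality.
  have key : V * Real.exp ((1 / (2 * V)) * ∫ x, (f x + h x) * Real.exp (-f x) ∂μ)
      ≤ ∫ x, Real.exp ((h x - f x) / 2) ∂μ := by
    -- the probability-like measure with density e^{-f}
    set d : M → NNReal := fun x => Real.toNNReal (Real.exp (-f x)) with hd
    have hdmeas : Measurable d := hf.neg.exp.real_toNNReal
    set ν : Measure M := μ.withDensity (fun x => (d x : ℝ≥0∞)) with hν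
    have hint_nu : ∀ (g : M → ℝ),
        ∫ x, g x ∂ν = ∫ x, Real.exp (-f x) * g x ∂μ := by
      intro g
      rw [hν, integral_withDensity_eq_integral_smul hdmeas]
      refine integral_congr_ae (Filter.Eventually.of_forall fun x => ?_)
      simp [hd, NNReal.smul_def, Real.coe_toNNReal _ (Real.exp_nonneg _)]
    have hint_iff : ∀ (g : M → ℝ),
        Integrable g ν ↔ Integrable (fun x => g x * Real.exp (-f x)) μ := by
      intro g
      rw [hν, integrable_withDensity_iff (hdmeas.coe_nnreal_ennreal)
        (Filter.Eventually.of_forall fun x => ENNReal.coe_lt_top)]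
      constructor <;> intro hI <;> refine hI.congr
        (Filter.Eventually.of_forall fun x => ?_) <;>
        simp [hd, Real.coe_toNNReal _ (Real.exp_nonneg _)]
    have hνuniv : ν Set.univ = ENNReal.ofReal V := by
      rw [hν, withDensity_apply _ MeasurableSet.univ, Measure.restrict_univ]
      have hcoe : ∀ x, ((d x : ℝ≥0∞)) = ENNReal.ofReal (Real.exp (-f x)) := fun x => rfl
      rw [lintegral_congr hcoe, ← ofReal_integral_eq_lintegral_ofReal hfint
        (Filter.Eventually.of_forall fun x => Real.exp_nonneg _), hfnorm]
    have : IsFiniteMeasure ν := ⟨by rw [hνuniv]; exact ENNReal.ofReal_lt_top⟩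
    have : NeZero ν := by
      refine ⟨fun h0 => ?_⟩
      rw [h0] at hνuniv
      simp only [Measure.coe_zero, Pi.zero_apply] at hνuniv
      exact absurd hνuniv.symm (by simp [ENNReal.ofReal_eq_zero, not_le, hV])
    -- Jensen for exp on ν
    have hg1 : Integrable (fun x => (f x + h x) / 2) ν := by
      rw [hint_iff]
      exact (hfhint.div_const 2).congr (Filter.Eventually.of_forall fun x => by ring)
    have hg2 : Integrable (fun x => Real.exp ((f x + h x) / 2)) ν := by
      rw [hint_iff]
      refine hmixint.congr (Filter.Eventually.of_forall fun x => ?_)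
      show Real.exp ((h x - f x) / 2) = Real.exp ((f x + h x) / 2) * Real.exp (-f x)
      rw [← Real.exp_add]
      congr 1
      ring
    have jensen := convexOn_exp.map_average_le continuous_exp.continuousOn isClosed_univ
      (Filter.Eventually.of_forall fun x => Set.mem_univ _) hg1 (by exact hg2)
    -- rewrite averages
    have htoReal : (ν Set.univ).toReal = V := by
      rw [hνuniv, ENNReal.toReal_ofReal hV.le]
    rw [average_eq, average_eq, measureReal_def, htoReal, smul_eq_mul, smul_eq_mul, hint_nu, hint_nu] at jensen
    have he1 : ∫ x, Real.exp (-f x) * ((f x + h x) / 2) ∂μ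
        = (1 / 2) * ∫ x, (f x + h x) * Real.exp (-f x) ∂μ := by
      rw [← integral_const_mul]
      exact integral_congr_ae (Filter.Eventually.of_forall fun x => by ring)
    have he2 : ∫ x, Real.exp (-f x) * Real.exp ((f x + h x) / 2) ∂μ
        = ∫ x, Real.exp ((h x - f x) / 2) ∂μ := by
      refine integral_congr_ae (Filter.Eventually.of_forall fun x => ?_)
      show Real.exp (-f x) * Real.exp ((f x + h x) / 2) = Real.exp ((h x - f x) / 2)
      rw [← Real.exp_add]
      congr 1
      ring
    rw [he1, he2] at jensen
    have : Real.exp ((1 / (2 * V)) * ∫ x, (f x + h x) * Real.exp (-f x) ∂μ)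
        ≤ V⁻¹ * ∫ x, Real.exp ((h x - f x) / 2) ∂μ := by
      have harg : (1 / (2 * V)) * ∫ x, (f x + h x) * Real.exp (-f x) ∂μ
          = V⁻¹ * ((1 / 2) * ∫ x, (f x + h x) * Real.exp (-f x) ∂μ) := by ring
      rw [harg]
      exact jensen
    calc V * Real.exp ((1 / (2 * V)) * ∫ x, (f x + h x) * Real.exp (-f x) ∂μ)
        ≤ V * (V⁻¹ * ∫ x, Real.exp ((h x - f x) / 2) ∂μ) := by
          exact mul_le_mul_of_nonneg_left this hV.le
      _ = ∫ x, Real.exp ((h x - f x) / 2) ∂μ := by field_simp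
  nlinarith [key]
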